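/- Define I(α) = ∫_{X/2}^{X} e(α·y·log y) dy and τ = X^(−23/25). Then ∫_{−τ}^{τ} |I(α)|² dα ≪ X for X sufficiently large. -/

import Mathlib

noncomputable def Iint (X α : ℝ) : ℂ :=
  ∫ y in (X / 2)..X, Complex.exp (2 * Real.pi * Complex.I * (α * y * Real.log y))

open intervalIntegral MeasureTheory

lemma Iint_cont (X : ℝ) : Continuous (fun α => Iint X α) := by
  apply intervalIntegral.continuous_parametric_intervalIntegral_of_continuous'
  apply Complex.continuous_exp.comp
  apply Continuous.mul continuous_const
  have h : Continuous fun p : ℝ × ℝ => p.1 * (p.2 * Real.log p.2) :=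
    (continuous_fst.mul (Real.continuous_mul_log.comp continuous_snd))
  have := (Complex.continuous_ofReal.comp h)
  convert this using 1
  ext p
  simp only [Function.comp_apply]
  push_cast
  ring

lemma Iint_triv (X α : ℝ) (hX : 0 ≤ X) : ‖Iint X α‖ ≤ X / 2 := by
  have := intervalIntegral.norm_integral_le_of_norm_le_const (C := 1)
    (f := fun y : ℝ => Complex.exp (2 * Real.pi * Complex.I * (α * y * Real.log y)))
    (a := X / 2) (b := X) ?_
  · calc ‖Iint X α‖ ≤ 1 * |X - X/2| := this
    _ = X / 2 := by rw [one_mul, abs_of_nonneg (by linarith)]; ring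
  · intro y _
    rw [Complex.norm_exp]
    have : (2 * ↑Real.pi * Complex.I * (↑α * ↑y * ↑(Real.log y))).re = 0 := by
      simp [Complex.mul_re, Complex.mul_im]
    rw [this, Real.exp_zero]

lemma Iint_ibp (X α : ℝ) (hX : 8 ≤ X) (hα : α ≠ 0) :
    ‖Iint X α‖ ≤ 1 / (|α| * Real.log (X / 2)) := by
  have hα' : 0 < |α| := abs_pos.mpr hα
  have hX0 : (0:ℝ) < X := by linarith
  have hX24 : (4:ℝ) ≤ X / 2 := by linarith
  set L : ℝ := Real.log (X / 2) with hLdef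
  have hlog4 : (1:ℝ) ≤ Real.log 4 := by
    have : Real.log 4 = 2 * Real.log 2 := by
      rw [show (4:ℝ) = 2^2 by norm_num, Real.log_pow]; push_cast; ring
    rw [this]
    nlinarith [Real.log_two_gt_d9]
  have hL1 : 1 ≤ L := le_trans hlog4 (Real.log_le_log (by norm_num) hX24)
  have hL0 : 0 < L := by linarith
  set c : ℂ := 2 * Real.pi * Complex.I * α with hcdef
  have habsc : ‖c‖ = 2 * Real.pi * |α| := by
    rw [hcdef]
    simp [norm_mul, Complex.norm_real, Real.norm_eq_abs,
      abs_of_pos Real.pi_pos]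
  have hc0 : c ≠ 0 := by
    intro h
    rw [h, norm_zero] at habsc
    nlinarith [Real.pi_pos]
  have hkey : ∀ y : ℝ, 4 ≤ y → (0 < y ∧ 1 ≤ Real.log y ∧ 0 < Real.log y + 1) := by
    intro y hy
    have hy0 : (0:ℝ) < y := by linarith
    have : (1:ℝ) ≤ Real.log y := le_trans hlog4 (Real.log_le_log (by norm_num) hy)
    exact ⟨hy0, this, by linarith⟩
  have hA0 : ∀ y : ℝ, 4 ≤ y → c * ((Real.log y : ℂ) + 1) ≠ 0 := by
    intro y hy
    obtain ⟨hy0, hly, hly1⟩ := hkey y hy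
    refine mul_ne_zero hc0 ?_
    have : ((Real.log y : ℂ) + 1) = ((Real.log y + 1 : ℝ) : ℂ) := by push_cast; ring
    rw [this]
    exact_mod_cast ne_of_gt hly1
  set u : ℝ → ℂ := fun y => (c * ((Real.log y : ℂ) + 1))⁻¹ with hudef
  set u' : ℝ → ℂ := fun y => -(c * ((y:ℂ))⁻¹) / (c * ((Real.log y : ℂ) + 1)) ^ 2 with hu'def
  set v : ℝ → ℂ := fun y => Complex.exp (c * ((y * Real.log y : ℝ) : ℂ)) with hvdef
  set v' : ℝ → ℂ := fun y => c * ((Real.log y : ℂ) + 1) * v y with hv'def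
  have hvabs : ∀ y : ℝ, ‖v y‖ = 1 := by
    intro y
    rw [hvdef]
    simp only
    rw [Complex.norm_exp]
    have : (c * ((y * Real.log y : ℝ) : ℂ)).re = 0 := by
      rw [hcdef]; simp [Complex.mul_re, Complex.mul_im]
    rw [this, Real.exp_zero]
  have hu : ∀ y ∈ Set.uIcc (X/2) X, HasDerivAt u (u' y) y := by
    intro y hy
    rw [Set.uIcc_of_le (by linarith : X/2 ≤ X)] at hy
    have hy4 : (4:ℝ) ≤ y := le_trans hX24 hy.1
    obtain ⟨hy0, _, _⟩ := hkey y hy4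
    have h1 : HasDerivAt (fun t : ℝ => ((Real.log t : ℂ))) (((y:ℝ)⁻¹ : ℝ) : ℂ) y :=
      (Real.hasDerivAt_log (ne_of_gt hy0)).ofReal_comp
    have h2 : HasDerivAt (fun t : ℝ => c * ((Real.log t : ℂ) + 1)) (c * ((y:ℝ)⁻¹ : ℝ)) y :=
      ((h1.add_const 1).const_mul c)
    have h3 : HasDerivAt (fun t : ℝ => (1:ℂ) / (c * ((Real.log t : ℂ) + 1)))
        ((0 * (c * ((Real.log y : ℂ) + 1)) - 1 * (c * (((y:ℝ)⁻¹ : ℝ) : ℂ)))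
          / (c * ((Real.log y : ℂ) + 1)) ^ 2) y :=
      (hasDerivAt_const y (1:ℂ)).div h2 (hA0 y hy4)
    have hfun : u = fun t : ℝ => (1:ℂ) / (c * ((Real.log t : ℂ) + 1)) := by
      funext t; rw [hudef]; simp only [one_div]
    rw [hfun]
    convert h3 using 1
    rw [hu'def]
    push_cast
    ring
  have hv : ∀ y ∈ Set.uIcc (X/2) X, HasDerivAt v (v' y) y := by
    intro y hy
    rw [Set.uIcc_of_le (by linarith : X/2 ≤ X)] at hy
    have hy4 : (4:ℝ) ≤ y := le_trans hX24 hy.1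
    obtain ⟨hy0, _, _⟩ := hkey y hy4
    have h1 : HasDerivAt (fun t : ℝ => ((t * Real.log t : ℝ) : ℂ))
        (((Real.log y + 1 : ℝ)) : ℂ) y :=
      (Real.hasDerivAt_mul_log (ne_of_gt hy0)).ofReal_comp
    have h2 := (h1.const_mul c).cexp
    convert h2 using 1
    rw [hv'def, hvdef]
    push_cast
    ring
  have hcontlog : ContinuousOn (fun y : ℝ => ((Real.log y : ℂ))) (Set.uIcc (X/2) X) := by
    apply Complex.continuous_ofReal.comp_continuousOn
    apply Real.continuousOn_log.mono
    intro y hy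
    rw [Set.uIcc_of_le (by linarith : X/2 ≤ X)] at hy
    have : (4:ℝ) ≤ y := le_trans hX24 hy.1
    simp only [Set.mem_compl_iff, Set.mem_singleton_iff]
    intro h; rw [h] at this; norm_num at this
  have hA0' : ∀ y ∈ Set.uIcc (X/2) X, c * ((Real.log y : ℂ) + 1) ≠ 0 := by
    intro y hy
    rw [Set.uIcc_of_le (by linarith : X/2 ≤ X)] at hy
    exact hA0 y (le_trans hX24 hy.1)
  have hy0' : ∀ y ∈ Set.uIcc (X/2) X, (y:ℂ) ≠ 0 := by
    intro y hy
    rw [Set.uIcc_of_le (by linarith : X/2 ≤ X)] at hy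
    have : (4:ℝ) ≤ y := le_trans hX24 hy.1
    exact_mod_cast (by intro h; rw [h] at this; norm_num at this : y ≠ 0)
  have hvcont : ContinuousOn v (Set.uIcc (X/2) X) := by
    apply Continuous.continuousOn
    apply Complex.continuous_exp.comp
    apply continuous_const.mul
    exact Complex.continuous_ofReal.comp Real.continuous_mul_log
  have hu'int : IntervalIntegrable u' volume (X/2) X := by
    apply ContinuousOn.intervalIntegrable
    apply ContinuousOn.div
    · exact (continuous_const.continuousOn.mul
        ((Complex.continuous_ofReal.comp_continuousOn continuous_id.continuousOn).inv₀ hy0')).neg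
    · exact ((continuous_const.continuousOn.mul (hcontlog.add continuous_const.continuousOn))).pow 2
    · intro y hy
      exact pow_ne_zero 2 (hA0' y hy)
  have hv'int : IntervalIntegrable v' volume (X/2) X := by
    apply ContinuousOn.intervalIntegrable
    exact (continuous_const.continuousOn.mul (hcontlog.add continuous_const.continuousOn)).mul hvcont
  have hIBP := intervalIntegral.integral_mul_deriv_eq_deriv_mul hu hv hu'int hv'int
  have hEq : Iint X α = ∫ y in (X/2)..X, u y * v' y := by
    rw [Iint]
    apply intervalIntegral.integral_congr
    intro y hy
    have hA := hA0' y hy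
    have huv : u y * v' y = v y := by
      rw [hudef, hv'def]
      simp only
      rw [← mul_assoc, inv_mul_cancel₀ hA, one_mul]
    show Complex.exp (2 * Real.pi * Complex.I * (α * y * Real.log y)) = u y * v' y
    rw [huv, hvdef]
    simp only
    congr 1
    rw [hcdef]
    push_cast
    ring
  rw [hEq, hIBP]
  have habsu : ∀ y : ℝ, X/2 ≤ y → 4 ≤ y →
      ‖u y‖ ≤ 1 / (2 * Real.pi * |α| * L) := by
    intro y hyX hy4
    obtain ⟨hy0, hly, hly1⟩ := hkey y hy4
    have hLy : L ≤ Real.log y + 1 := by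
      have : L ≤ Real.log y := Real.log_le_log (by linarith) hyX
      linarith
    rw [hudef]
    simp only [norm_inv, norm_mul]
    have h1 : ‖(Real.log y : ℂ) + 1‖ = Real.log y + 1 := by
      have : ((Real.log y : ℂ) + 1) = ((Real.log y + 1 : ℝ) : ℂ) := by push_cast; ring
      rw [this, Complex.norm_real, Real.norm_eq_abs, abs_of_pos hly1]
    rw [h1, habsc, one_div]
    apply inv_anti₀
    · positivity
    · exact mul_le_mul_of_nonneg_left hLy (by positivity)
  have hbound2 : ‖∫ y in (X/2)..X, u' y * v y‖
      ≤ 1 / (2 * Real.pi * |α| * L ^ 2) := by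
    have hb := intervalIntegral.norm_integral_le_of_norm_le_const
      (C := 1 / (2 * Real.pi * |α| * (X/2) * L ^ 2))
      (f := fun y => u' y * v y) (a := X/2) (b := X) ?_
    · have hXX : |X - X/2| = X/2 := by
        rw [abs_of_nonneg (by linarith : (0:ℝ) ≤ X - X/2)]; ring
      rw [hXX] at hb
      refine le_trans hb (le_of_eq ?_)
      field_simp
    · intro y hy
      rw [Set.uIoc_of_le (by linarith : X/2 ≤ X)] at hy
      have hyX : X/2 ≤ y := le_of_lt hy.1
      have hy4 : (4:ℝ) ≤ y := le_trans hX24 hyX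
      obtain ⟨hy0, hly, hly1⟩ := hkey y hy4
      have hLy : L ≤ Real.log y + 1 := by
        have : L ≤ Real.log y := Real.log_le_log (by linarith) hyX
        linarith
      have h1 : ‖(Real.log y : ℂ) + 1‖ = Real.log y + 1 := by
        have : ((Real.log y : ℂ) + 1) = ((Real.log y + 1 : ℝ) : ℂ) := by push_cast; ring
        rw [this, Complex.norm_real, Real.norm_eq_abs, abs_of_pos hly1]
      rw [norm_mul, hvabs y, mul_one]
      have habsu' : ‖u' y‖
          = ‖c‖ * (y : ℝ)⁻¹ / (‖c‖ * (Real.log y + 1)) ^ 2 := by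
        rw [hu'def]
        simp only [norm_div, norm_neg, norm_mul, norm_pow, norm_inv,
          Complex.norm_real, Real.norm_eq_abs,
          abs_of_pos hy0, abs_of_pos Real.pi_pos, h1]
      rw [habsu', habsc]
      have base : (X/2) * L^2 ≤ y * (Real.log y + 1)^2 :=
        mul_le_mul hyX (pow_le_pow_left₀ hL0.le hLy 2) (by positivity) (by linarith)
      rw [div_le_div_iff₀ (by positivity) (by positivity)]
      have hπ : (0:ℝ) < Real.pi := Real.pi_pos
      calc 2 * Real.pi * |α| * y⁻¹ * (2 * Real.pi * |α| * (X/2) * L^2)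
          = (2 * Real.pi * |α|) ^ 2 * ((X/2) * L^2) * y⁻¹ := by ring
        _ ≤ (2 * Real.pi * |α|) ^ 2 * (y * (Real.log y + 1)^2) * y⁻¹ := by
            exact mul_le_mul_of_nonneg_right
              (mul_le_mul_of_nonneg_left base (by positivity)) (by positivity)
        _ = (2 * Real.pi * |α| * (Real.log y + 1)) ^ 2 * (y * y⁻¹) := by ring
        _ = 1 * (2 * Real.pi * |α| * (Real.log y + 1)) ^ 2 := by
            rw [mul_inv_cancel₀ (ne_of_gt hy0)]; ring
  have hπ3 : (3:ℝ) ≤ Real.pi := by linarith [Real.pi_gt_three]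
  have step : ‖u X * v X - u (X/2) * v (X/2) - ∫ y in (X/2)..X, u' y * v y‖
      ≤ 1 / (2 * Real.pi * |α| * L) + 1 / (2 * Real.pi * |α| * L)
        + 1 / (2 * Real.pi * |α| * L ^ 2) := by
    have n1 : ‖u X * v X - u (X/2) * v (X/2) - ∫ y in (X/2)..X, u' y * v y‖
        ≤ ‖u X * v X‖ + ‖u (X/2) * v (X/2)‖ + ‖∫ y in (X/2)..X, u' y * v y‖ := by
      calc ‖u X * v X - u (X/2) * v (X/2) - ∫ y in (X/2)..X, u' y * v y‖
          ≤ ‖u X * v X - u (X/2) * v (X/2)‖ + ‖∫ y in (X/2)..X, u' y * v y‖ :=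
            norm_sub_le _ _
        _ ≤ ‖u X * v X‖ + ‖u (X/2) * v (X/2)‖ + ‖∫ y in (X/2)..X, u' y * v y‖ := by
            have := norm_sub_le (u X * v X) (u (X/2) * v (X/2))
            linarith
    rw [norm_mul, norm_mul, hvabs, hvabs, mul_one, mul_one] at n1
    have b1 := habsu X (by linarith) (by linarith)
    have b2 := habsu (X/2) le_rfl hX24
    linarith [hbound2]
  refine le_trans step ?_
  have e1 : 1 / (2 * Real.pi * |α| * L ^ 2) ≤ 1 / (2 * Real.pi * |α| * L) := by
    apply one_div_le_one_div_of_le (by positivity)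
    have hLL : L ≤ L ^ 2 := by nlinarith
    exact mul_le_mul_of_nonneg_left hLL (by positivity)
  have e2 : 3 / (2 * Real.pi * |α| * L) ≤ 1 / (|α| * L) := by
    rw [div_le_div_iff₀ (by positivity) (by positivity)]
    nlinarith [mul_pos hα' hL0, hπ3]
  have e3 : (3:ℝ) / (2 * Real.pi * |α| * L)
      = 1 / (2 * Real.pi * |α| * L) + 1 / (2 * Real.pi * |α| * L)
        + 1 / (2 * Real.pi * |α| * L) := by ring
  linarith

lemma int_inv_sq (a b : ℝ) (h : ∀ x ∈ Set.uIcc a b, x ≠ 0) :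
    ∫ x in a..b, (x ^ 2)⁻¹ = a⁻¹ - b⁻¹ := by
  have hd : ∀ x ∈ Set.uIcc a b, HasDerivAt (fun y : ℝ => -y⁻¹) ((x ^ 2)⁻¹) x := by
    intro x hx
    have := (hasDerivAt_inv (h x hx)).neg
    exact (by simpa using this : HasDerivAt (-fun y : ℝ => y⁻¹) ((x ^ 2)⁻¹) x)
  have hint : IntervalIntegrable (fun x : ℝ => (x ^ 2)⁻¹) MeasureTheory.volume a b := by
    apply ContinuousOn.intervalIntegrable
    exact ((continuousOn_id.pow 2).inv₀ (fun x hx => pow_ne_zero 2 (h x hx)))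
  have := intervalIntegral.integral_eq_sub_of_hasDerivAt hd hint
  rw [this]
  ring

theorem stmt8 :
    ∃ C : ℝ, 0 < C ∧ ∃ X₀ : ℝ, ∀ X : ℝ, X ≥ X₀ →
      ∫ α in (-(X ^ (-(23 : ℝ) / 25)))..(X ^ (-(23 : ℝ) / 25)),
          ‖Iint X α‖ ^ 2
        ≤ C * X := by
  refine ⟨3, by norm_num, 8, ?_⟩
  intro X hX
  have hX0 : (0:ℝ) < X := by linarith
  set τ : ℝ := X ^ (-(23 : ℝ) / 25) with hτdef
  have hτ0 : 0 < τ := Real.rpow_pos_of_pos hX0 _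
  set δ : ℝ := X⁻¹ with hδdef
  have hδ0 : 0 < δ := by positivity
  have hδτ : δ ≤ τ := by
    rw [hδdef, hτdef, ← Real.rpow_neg_one X]
    exact Real.rpow_le_rpow_of_exponent_le (by linarith) (by norm_num)
  set L : ℝ := Real.log (X / 2) with hLdef
  have hlog4 : (1:ℝ) ≤ Real.log 4 := by
    have : Real.log 4 = 2 * Real.log 2 := by
      rw [show (4:ℝ) = 2^2 by norm_num, Real.log_pow]; push_cast; ring
    rw [this]
    nlinarith [Real.log_two_gt_d9]
  have hL1 : 1 ≤ L := le_trans hlog4 (Real.log_le_log (by norm_num) (by linarith))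
  have hL0 : 0 < L := by linarith
  set F : ℝ → ℝ := fun α => ‖Iint X α‖ ^ 2 with hFdef
  have hFc : Continuous F := (continuous_norm.comp (Iint_cont X)).pow 2
  have hFint : ∀ a b : ℝ, IntervalIntegrable F MeasureTheory.volume a b :=
    fun a b => hFc.intervalIntegrable a b
  have hF0 : ∀ α, 0 ≤ F α := fun α => by positivity
  -- split the integral
  have h1 : (∫ α in (-τ)..(-δ), F α) + (∫ α in (-δ)..δ, F α) = ∫ α in (-τ)..δ, F α :=
    intervalIntegral.integral_add_adjacent_intervals (hFint _ _) (hFint _ _)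
  have h2 : (∫ α in (-τ)..δ, F α) + (∫ α in δ..τ, F α) = ∫ α in (-τ)..τ, F α :=
    intervalIntegral.integral_add_adjacent_intervals (hFint _ _) (hFint _ _)
  -- middle bound
  have hmid : ∫ α in (-δ)..δ, F α ≤ X / 2 := by
    have hb : ∀ x ∈ Set.Icc (-δ) δ, F x ≤ (X/2)^2 := by
      intro x _
      have := Iint_triv X x (by linarith)
      calc F x = ‖Iint X x‖ ^ 2 := rfl
        _ ≤ (X/2)^2 := by
            apply pow_le_pow_left₀ (norm_nonneg _) this
    have := intervalIntegral.integral_mono_on (by linarith : -δ ≤ δ) (hFint _ _)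
      (intervalIntegrable_const : IntervalIntegrable (fun _ => (X/2)^2) MeasureTheory.volume (-δ) δ) hb
    have hc : ∫ _ in (-δ)..δ, (X/2)^2 = (δ - (-δ)) • ((X/2)^2) := intervalIntegral.integral_const _
    rw [hc] at this
    refine le_trans this (le_of_eq ?_)
    rw [smul_eq_mul, hδdef]
    field_simp
    ring
  -- tail pointwise bound
  have htail : ∀ x : ℝ, x ≠ 0 → δ ≤ |x| → F x ≤ (L^2)⁻¹ * (x^2)⁻¹ := by
    intro x hx _
    have hb := Iint_ibp X x (by linarith) hx
    have habs : (0:ℝ) < |x| := abs_pos.mpr hx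
    calc F x = ‖Iint X x‖ ^ 2 := rfl
      _ ≤ (1 / (|x| * L))^2 := pow_le_pow_left₀ (norm_nonneg _) hb 2
      _ = (L^2)⁻¹ * (x^2)⁻¹ := by
          rw [div_pow, one_pow, mul_pow, sq_abs, one_div, mul_inv]
          ring
  have hgint : ∀ a b : ℝ, (∀ x ∈ Set.uIcc a b, x ≠ 0) →
      IntervalIntegrable (fun x : ℝ => (L^2)⁻¹ * (x^2)⁻¹) MeasureTheory.volume a b := by
    intro a b h
    apply ContinuousOn.intervalIntegrable
    exact continuousOn_const.mul
      ((continuousOn_id.pow 2).inv₀ (fun x hx => pow_ne_zero 2 (h x hx)))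
  have hne_pos : ∀ x ∈ Set.uIcc δ τ, x ≠ 0 := by
    intro x hx
    rw [Set.uIcc_of_le hδτ] at hx
    exact ne_of_gt (lt_of_lt_of_le hδ0 hx.1)
  have hne_neg : ∀ x ∈ Set.uIcc (-τ) (-δ), x ≠ 0 := by
    intro x hx
    rw [Set.uIcc_of_le (by linarith : -τ ≤ -δ)] at hx
    exact ne_of_lt (lt_of_le_of_lt hx.2 (by linarith))
  have hgval : ∀ a b : ℝ, (∀ x ∈ Set.uIcc a b, x ≠ 0) →
      ∫ x in a..b, (L^2)⁻¹ * (x^2)⁻¹ = (L^2)⁻¹ * (a⁻¹ - b⁻¹) := by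
    intro a b h
    rw [intervalIntegral.integral_const_mul, int_inv_sq a b h]
  -- right tail
  have hrt : ∫ α in δ..τ, F α ≤ (L^2)⁻¹ * (δ⁻¹ - τ⁻¹) := by
    rw [← hgval δ τ hne_pos]
    apply intervalIntegral.integral_mono_on hδτ (hFint _ _) (hgint _ _ hne_pos)
    intro x hx
    have hx0 : 0 < x := lt_of_lt_of_le hδ0 hx.1
    exact htail x (ne_of_gt hx0) (by rw [abs_of_pos hx0]; exact hx.1)
  -- left tail
  have hlt : ∫ α in (-τ)..(-δ), F α ≤ (L^2)⁻¹ * (δ⁻¹ - τ⁻¹) := by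
    have : ∫ α in (-τ)..(-δ), F α ≤ ∫ x in (-τ)..(-δ), (L^2)⁻¹ * (x^2)⁻¹ := by
      apply intervalIntegral.integral_mono_on (by linarith : -τ ≤ -δ) (hFint _ _)
        (hgint _ _ hne_neg)
      intro x hx
      have hx0 : x < 0 := lt_of_le_of_lt hx.2 (by linarith)
      exact htail x (ne_of_lt hx0) (by rw [abs_of_neg hx0]; linarith [hx.2])
    refine le_trans this (le_of_eq ?_)
    rw [hgval _ _ hne_neg]
    rw [inv_neg, inv_neg]
    ring
  -- combine
  have hτδinv : (L^2)⁻¹ * (δ⁻¹ - τ⁻¹) ≤ X := by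
    have h1' : δ⁻¹ - τ⁻¹ ≤ X := by
      rw [hδdef, inv_inv]
      have : 0 < τ⁻¹ := by positivity
      linarith
    have h2' : (L^2)⁻¹ ≤ 1 := by
      rw [inv_le_one_iff₀]
      right
      nlinarith
    have h3' : 0 ≤ δ⁻¹ - τ⁻¹ := by
      have := inv_anti₀ hδ0 hδτ
      linarith
    nlinarith
  calc ∫ α in (-τ)..τ, F α
      = (∫ α in (-τ)..(-δ), F α) + (∫ α in (-δ)..δ, F α) + (∫ α in δ..τ, F α) := by
        rw [h1, h2]
    _ ≤ (L^2)⁻¹ * (δ⁻¹ - τ⁻¹) + X/2 + (L^2)⁻¹ * (δ⁻¹ - τ⁻¹) := by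
        linarith
    _ ≤ X + X/2 + X := by linarith
    _ ≤ 3 * X := by linarith
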